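/- arXiv:2101.08364 — 2 statements merged into one kernel-verified Lean document; each statement's English description precedes it below -/
import Mathlib

section
/- Simulation of CbV in the bang calculus: for every λ-term t and operator o ∈ O: (soundness) if t →βv t' then t^v →!β · →d^= t'^v with t'^v d-normal, and if t →o t' then t^v →o · →d^= t'^v with t'^v d-normal; (completeness) if t^v →!β · ↠d S then t^v →!β · →d^= S with S = t'^v and t →βv t' for some λ-term t', and if t^v →o · ↠d S then t^v →o · →d^= S with S = t'^v and t →o t' for some λ-term t'. -/
namespace BangPaper

/-- λ-terms with operators `O`, each with arity `ar o`. -/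
inductive Lam (O : Type) (ar : O → ℕ) : Type
  | var : ℕ → Lam O ar
  | lam : ℕ → Lam O ar → Lam O ar
  | app : Lam O ar → Lam O ar → Lam O ar
  | op  : (o : O) → (Fin (ar o) → Lam O ar) → Lam O ar

/-- Terms of the bang calculus `Λ!O`. -/
inductive BT (O : Type) (ar : O → ℕ) : Type
  | var : ℕ → BT O ar
  | lam : ℕ → BT O ar → BT O ar
  | app : BT O ar → BT O ar → BT O ar
  | bang : BT O ar → BT O ar
  | op  : (o : O) → (Fin (ar o) → BT O ar) → BT O ar

variable {O : Type} {ar : O → ℕ}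

/-- Values: variables and abstractions. -/
def Lam.isValue : Lam O ar → Prop
  | .var _ => True
  | .lam _ _ => True
  | _ => False

/-- Substitution `t[u/x]` on λ-terms. -/
def Lam.subst : Lam O ar → ℕ → Lam O ar → Lam O ar
  | .var y, x, u => if y = x then u else .var y
  | .lam y t, x, u => if y = x then .lam y t else .lam y (Lam.subst t x u)
  | .app t s, x, u => .app (Lam.subst t x u) (Lam.subst s x u)
  | .op o ts, x, u => .op o (fun i => Lam.subst (ts i) x u)

/-- Substitution `T[S/x]` on bang-calculus terms. -/
def BT.subst : BT O ar → ℕ → BT O ar → BT O ar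
  | .var y, x, u => if y = x then u else .var y
  | .lam y t, x, u => if y = x then .lam y t else .lam y (BT.subst t x u)
  | .app t s, x, u => .app (BT.subst t x u) (BT.subst s x u)
  | .bang t, x, u => .bang (BT.subst t x u)
  | .op o ts, x, u => .op o (fun i => BT.subst (ts i) x u)

/-- One-hole contexts for λ-terms. -/
inductive LCtx (O : Type) (ar : O → ℕ) : Type
  | hole : LCtx O ar
  | lam  : ℕ → LCtx O ar → LCtx O ar
  | appL : LCtx O ar → Lam O ar → LCtx O ar
  | appR : Lam O ar → LCtx O ar → LCtx O ar
  | op   : (o : O) → (Fin (ar o) → Lam O ar) → Fin (ar o) → LCtx O ar → LCtx O ar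

/-- One-hole contexts for bang-calculus terms. -/
inductive BCtx (O : Type) (ar : O → ℕ) : Type
  | hole : BCtx O ar
  | lam  : ℕ → BCtx O ar → BCtx O ar
  | appL : BCtx O ar → BT O ar → BCtx O ar
  | appR : BT O ar → BCtx O ar → BCtx O ar
  | bang : BCtx O ar → BCtx O ar
  | op   : (o : O) → (Fin (ar o) → BT O ar) → Fin (ar o) → BCtx O ar → BCtx O ar

/-- Plugging a λ-term in a λ-context. -/
def LCtx.plug : LCtx O ar → Lam O ar → Lam O ar
  | .hole, t => t
  | .lam x c, t => .lam x (LCtx.plug c t)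
  | .appL c s, t => .app (LCtx.plug c t) s
  | .appR s c, t => .app s (LCtx.plug c t)
  | .op o ts i c, t => .op o (Function.update ts i (LCtx.plug c t))

/-- CbN level of a λ-context. -/
def LCtx.levN : LCtx O ar → ℕ
  | .hole => 0
  | .lam _ c => LCtx.levN c
  | .appL c _ => LCtx.levN c
  | .appR _ c => LCtx.levN c + 1
  | .op _ _ _ c => LCtx.levN c + 1

/-- CbV level of a λ-context. -/
def LCtx.levV : LCtx O ar → ℕ
  | .hole => 0
  | .lam _ c => LCtx.levV c + 1
  | .appL (.lam _ c') _ => LCtx.levV c'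
  | .appL c _ => LCtx.levV c
  | .appR _ c => LCtx.levV c
  | .op _ _ _ c => LCtx.levV c + 1

/-- Plugging a bang-term in a bang-context. -/
def BCtx.plug : BCtx O ar → BT O ar → BT O ar
  | .hole, t => t
  | .lam x c, t => .lam x (BCtx.plug c t)
  | .appL c s, t => .app (BCtx.plug c t) s
  | .appR s c, t => .app s (BCtx.plug c t)
  | .bang c, t => .bang (BCtx.plug c t)
  | .op o ts i c, t => .op o (Function.update ts i (BCtx.plug c t))

/-- Bang-calculus level of a context. -/
def BCtx.lev : BCtx O ar → ℕ
  | .hole => 0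
  | .lam _ c => BCtx.lev c
  | .appL c _ => BCtx.lev c
  | .appR _ c => BCtx.lev c
  | .bang c => BCtx.lev c + 1
  | .op _ _ _ c => BCtx.lev c + 1

/-- Contextual closure of a root rule on λ-terms. -/
def Lam.Step (root : Lam O ar → Lam O ar → Prop) (t s : Lam O ar) : Prop :=
  ∃ (c : LCtx O ar) (a b : Lam O ar), root a b ∧ t = c.plug a ∧ s = c.plug b

/-- Step at level `k` (w.r.t. a level function `lev` on λ-contexts). -/
def Lam.StepAt (lev : LCtx O ar → ℕ) (root : Lam O ar → Lam O ar → Prop)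
    (k : ℕ) (t s : Lam O ar) : Prop :=
  ∃ (c : LCtx O ar) (a b : Lam O ar), root a b ∧ t = c.plug a ∧ s = c.plug b ∧ lev c = k

/-- Least level of a λ-term w.r.t. a redex set `Red` and level function `lev`. -/
noncomputable def Lam.ll (lev : LCtx O ar → ℕ) (Red : Lam O ar → Prop) (t : Lam O ar) : ℕ∞ :=
  sInf { n : ℕ∞ | ∃ (c : LCtx O ar) (r : Lam O ar), Red r ∧ t = c.plug r ∧ (lev c : ℕ∞) = n }

/-- Least-level step. -/
def Lam.LLStep (lev : LCtx O ar → ℕ) (Red : Lam O ar → Prop)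
    (root : Lam O ar → Lam O ar → Prop) (t s : Lam O ar) : Prop :=
  ∃ k : ℕ, Lam.StepAt lev root k t s ∧ (k : ℕ∞) = Lam.ll lev Red t

/-- Internal (non-least-level) step. -/
def Lam.InStep (lev : LCtx O ar → ℕ) (Red : Lam O ar → Prop)
    (root : Lam O ar → Lam O ar → Prop) (t s : Lam O ar) : Prop :=
  ∃ k : ℕ, Lam.StepAt lev root k t s ∧ Lam.ll lev Red t < (k : ℕ∞)

/-- Contextual closure of a root rule on bang-terms. -/
def BT.Step (root : BT O ar → BT O ar → Prop) (t s : BT O ar) : Prop :=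
  ∃ (c : BCtx O ar) (a b : BT O ar), root a b ∧ t = c.plug a ∧ s = c.plug b

/-- Step at level `k` in the bang calculus. -/
def BT.StepAt (root : BT O ar → BT O ar → Prop) (k : ℕ) (t s : BT O ar) : Prop :=
  ∃ (c : BCtx O ar) (a b : BT O ar), root a b ∧ t = c.plug a ∧ s = c.plug b ∧ c.lev = k

/-- Least level of a bang-term w.r.t. a redex set `Red`. -/
noncomputable def BT.ll (Red : BT O ar → Prop) (t : BT O ar) : ℕ∞ :=
  sInf { n : ℕ∞ | ∃ (c : BCtx O ar) (r : BT O ar), Red r ∧ t = c.plug r ∧ (c.lev : ℕ∞) = n }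

/-- Least-level step in the bang calculus. -/
def BT.LLStep (Red : BT O ar → Prop) (root : BT O ar → BT O ar → Prop)
    (t s : BT O ar) : Prop :=
  ∃ k : ℕ, BT.StepAt root k t s ∧ (k : ℕ∞) = BT.ll Red t

/-- Internal (non-least-level) step in the bang calculus. -/
def BT.InStep (Red : BT O ar → Prop) (root : BT O ar → BT O ar → Prop)
    (t s : BT O ar) : Prop :=
  ∃ k : ℕ, BT.StepAt root k t s ∧ BT.ll Red t < (k : ℕ∞)

/-- β-rule: `(λx.t)s ↦β t[s/x]`. -/
def betaRoot : Lam O ar → Lam O ar → Prop := fun a b =>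
  ∃ x t s, a = Lam.app (Lam.lam x t) s ∧ b = Lam.subst t x s

/-- β-redexes. -/
def betaRedex : Lam O ar → Prop := fun a => ∃ x t s, a = Lam.app (Lam.lam x t) s

/-- βv-rule: `(λx.t)V ↦βv t[V/x]` for `V` a value. -/
def betavRoot : Lam O ar → Lam O ar → Prop := fun a b =>
  ∃ x t v, Lam.isValue v ∧ a = Lam.app (Lam.lam x t) v ∧ b = Lam.subst t x v

/-- βv-redexes. -/
def betavRedex : Lam O ar → Prop := fun a => ∃ x t v, Lam.isValue v ∧ a = Lam.app (Lam.lam x t) v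

/-- !β-rule: `(λx.T)(!S) ↦!β T[S/x]`. -/
def bbetaRoot : BT O ar → BT O ar → Prop := fun a b =>
  ∃ x T S, a = BT.app (BT.lam x T) (BT.bang S) ∧ b = BT.subst T x S

/-- !β-redexes. -/
def bbetaRedex : BT O ar → Prop := fun a => ∃ x T S, a = BT.app (BT.lam x T) (BT.bang S)

/-- `der := λx.x`. -/
def der : BT O ar := BT.lam 0 (BT.var 0)

/-- d-rule: `der(!T) ↦d T`. -/
def dRoot : BT O ar → BT O ar → Prop := fun a b => a = BT.app der (BT.bang b)

/-- CbN translation of λ-terms into the bang calculus. -/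
def cbn : Lam O ar → BT O ar
  | .var x => .var x
  | .lam x t => .lam x (cbn t)
  | .app t s => .app (cbn t) (.bang (cbn s))
  | .op o ts => .op o (fun i => cbn (ts i))

/-- CbV translation of λ-terms into the bang calculus. -/
def cbv : Lam O ar → BT O ar
  | .var x => .bang (.var x)
  | .lam x t => .bang (.lam x (cbv t))
  | .app t s =>
      match cbv t with
      | .bang T => .app T (cbv s)
      | T => .app (.app der T) (cbv s)
  | .op o ts => .op o (fun i => cbv (ts i))

/-- CbN translation of λ-contexts into bang-contexts. -/
def cbnCtx : LCtx O ar → BCtx O ar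
  | .hole => .hole
  | .lam x c => .lam x (cbnCtx c)
  | .appL c t => .appL (cbnCtx c) (.bang (cbn t))
  | .appR t c => .appR (cbn t) (.bang (cbnCtx c))
  | .op o ts i c => .op o (fun j => cbn (ts j)) i (cbnCtx c)

/-- CbV translation of λ-contexts into bang-contexts. -/
def cbvCtx : LCtx O ar → BCtx O ar
  | .hole => .hole
  | .lam x c => .bang (.lam x (cbvCtx c))
  | .appL c t =>
      match cbvCtx c with
      | .bang C => .appL C (cbv t)
      | C => .appL (.appR der C) (cbv t)
  | .appR t c =>
      match cbv t with
      | .bang T => .appR T (cbvCtx c)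
      | T => .appR (.app der T) (cbvCtx c)
  | .op o ts i c => .op o (fun j => cbv (ts j)) i (cbvCtx c)

/-- `a` is `r`-normal: no `r`-step from `a`. -/
def Normal {α : Type*} (r : α → α → Prop) (a : α) : Prop := ∀ b, ¬ r a b

/-- `a` is strongly `r`-normalizing. -/
def SN {α : Type*} (r : α → α → Prop) (a : α) : Prop := Acc (fun x y => r y x) a

/-- `e` is a normalizing strategy for `r`: it has the same normal forms as `r`, and
from every `r`-normalizable term every maximal `e`-sequence ends in a normal form
(i.e. it cannot be extended infinitely). -/
def NormalizingStrategy {α : Type*} (r e : α → α → Prop) : Prop :=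
  (∀ a, Normal e a ↔ Normal r a) ∧
  ∀ t u, Relation.ReflTransGen r t u → Normal r u → SN e t

/-- Redex set of `→!β ∪ →O` for a family of operator rules. -/
def BT.RedSet (rules : O → BT O ar → BT O ar → Prop) : BT O ar → Prop :=
  fun A => bbetaRedex A ∨ ∃ o B, rules o A B

/-- Step at level `k` of the compound reduction `→!β ∪ →O`. -/
def BT.FullAt (rules : O → BT O ar → BT O ar → Prop) (k : ℕ) (T S : BT O ar) : Prop :=
  BT.StepAt bbetaRoot k T S ∨ ∃ o, BT.StepAt (rules o) k T S

/-- The compound reduction `→!β ∪ →O` of the bang calculus. -/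
def BT.Full (rules : O → BT O ar → BT O ar → Prop) (T S : BT O ar) : Prop :=
  ∃ k, BT.FullAt rules k T S

/-- Least-level step of `→!β ∪ →O`. -/
def BT.FullLL (rules : O → BT O ar → BT O ar → Prop) (T S : BT O ar) : Prop :=
  ∃ k : ℕ, BT.FullAt rules k T S ∧ (k : ℕ∞) = BT.ll (BT.RedSet rules) T

/-- Internal step of `→!β ∪ →O`. -/
def BT.FullIn (rules : O → BT O ar → BT O ar → Prop) (T S : BT O ar) : Prop :=
  ∃ k : ℕ, BT.FullAt rules k T S ∧ BT.ll (BT.RedSet rules) T < (k : ℕ∞)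

/-- Redex set of `→base ∪ →O` on λ-terms. -/
def Lam.RedSet (base : Lam O ar → Prop) (rules : O → Lam O ar → Lam O ar → Prop) :
    Lam O ar → Prop :=
  fun a => base a ∨ ∃ o b, rules o a b

/-- Step at level `k` of the compound reduction `→root ∪ →O` on λ-terms. -/
def Lam.FullAt (lev : LCtx O ar → ℕ) (root : Lam O ar → Lam O ar → Prop)
    (rules : O → Lam O ar → Lam O ar → Prop) (k : ℕ) (t s : Lam O ar) : Prop :=
  Lam.StepAt lev root k t s ∨ ∃ o, Lam.StepAt lev (rules o) k t s

/-- Compound reduction `→root ∪ →O` on λ-terms. -/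
def Lam.Full (lev : LCtx O ar → ℕ) (root : Lam O ar → Lam O ar → Prop)
    (rules : O → Lam O ar → Lam O ar → Prop) (t s : Lam O ar) : Prop :=
  ∃ k, Lam.FullAt lev root rules k t s

/-- Least-level step of the compound reduction on λ-terms. -/
def Lam.FullLL (lev : LCtx O ar → ℕ) (base : Lam O ar → Prop)
    (root : Lam O ar → Lam O ar → Prop)
    (rules : O → Lam O ar → Lam O ar → Prop) (t s : Lam O ar) : Prop :=
  ∃ k : ℕ, Lam.FullAt lev root rules k t s ∧ (k : ℕ∞) = Lam.ll lev (Lam.RedSet base rules) t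

/-- Internal step of the compound reduction on λ-terms. -/
def Lam.FullIn (lev : LCtx O ar → ℕ) (base : Lam O ar → Prop)
    (root : Lam O ar → Lam O ar → Prop)
    (rules : O → Lam O ar → Lam O ar → Prop) (t s : Lam O ar) : Prop :=
  ∃ k : ℕ, Lam.FullAt lev root rules k t s ∧ Lam.ll lev (Lam.RedSet base rules) t < (k : ℕ∞)
/-! ### Auxiliary lemmas -/

open Classical in
/-- 1 if `app T S` is a d-redex, else 0. -/
noncomputable def dflag (T S : BT O ar) : ℕ :=
  if (T = der ∧ ∃ S', S = .bang S') then 1 else 0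

/-- Number of d-redex occurrences. -/
noncomputable def dcount : BT O ar → ℕ
  | .var _ => 0
  | .lam _ T => dcount T
  | .app T S => dcount T + dcount S + dflag T S
  | .bang T => dcount T
  | .op _ Ts => ∑ i, dcount (Ts i)

lemma dflag_der_bang (S : BT O ar) : dflag der (.bang S) = 1 := by
  simp [dflag]

lemma dflag_of_ne_der {T : BT O ar} (h : T ≠ der) (S : BT O ar) : dflag T S = 0 := by
  simp [dflag, h]

lemma dflag_of_ne_bang {T S : BT O ar} (h : ∀ S', S ≠ .bang S') : dflag T S = 0 := by
  simp only [dflag, ite_eq_right_iff]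
  rintro ⟨-, S', rfl⟩
  exact absurd rfl (h S')

/-- `cbv` always produces a bang, an app, or an op. -/
lemma cbv_shape (t : Lam O ar) :
    (∃ S, cbv t = .bang S) ∨ (∃ T S, cbv t = .app T S) ∨ (∃ o' Ts, cbv t = .op o' Ts) := by
  cases t with
  | var x => exact Or.inl ⟨_, rfl⟩
  | lam x u => exact Or.inl ⟨_, rfl⟩
  | op o' ts => exact Or.inr (Or.inr ⟨_, _, rfl⟩)
  | app t1 t2 =>
      refine Or.inr (Or.inl ?_)
      cases h : cbv t1 <;> simp [cbv, h]

lemma cbv_ne_var (t : Lam O ar) (y : ℕ) : cbv t ≠ .var y := by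
  rcases cbv_shape t with ⟨S, h⟩ | ⟨T, S, h⟩ | ⟨o', Ts, h⟩ <;> simp [h]

lemma cbv_app_shape (t1 t2 : Lam O ar) : ∃ T S, cbv (.app t1 t2) = .app T S := by
  cases h : cbv t1 <;> simp [cbv, h]

lemma cbv_app_bang {t1 : Lam O ar} {T : BT O ar} (h : cbv t1 = .bang T) (t2 : Lam O ar) :
    cbv (.app t1 t2) = .app T (cbv t2) := by
  simp [cbv, h]

lemma cbv_app_not_bang {t1 : Lam O ar} (h : ∀ S, cbv t1 ≠ .bang S) (t2 : Lam O ar) :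
    cbv (.app t1 t2) = .app (.app der (cbv t1)) (cbv t2) := by
  cases hh : cbv t1 <;> simp [cbv, hh] <;> exact absurd hh (h _)

lemma dcount_der : dcount (der : BT O ar) = 0 := by simp [der, dcount]

/-- If `cbv t` is a bang then `t` is a value. -/
lemma value_of_cbv_bang {t : Lam O ar} {S : BT O ar} (h : cbv t = .bang S) : t.isValue := by
  cases t with
  | var x => trivial
  | lam x u => trivial
  | app t1 t2 => obtain ⟨T, S', h'⟩ := cbv_app_shape t1 t2; rw [h'] at h; cases h
  | op o' ts => simp [cbv] at h

lemma cbv_value {t : Lam O ar} (h : t.isValue) : ∃ W, cbv t = .bang W := by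
  cases t with
  | var x => exact ⟨_, rfl⟩
  | lam x u => exact ⟨_, rfl⟩
  | app t1 t2 => exact absurd h (by simp [Lam.isValue])
  | op o' ts => exact absurd h (by simp [Lam.isValue])

/-- The body of a `cbv`-bang is never `der`. -/
lemma bang_ne_der {t : Lam O ar} {T : BT O ar} (h : cbv t = .bang T) : T ≠ der := by
  cases t with
  | var x =>
      simp only [cbv] at h
      injection h with h; subst h; simp [der]
  | lam x u =>
      simp only [cbv] at h
      injection h with h; subst h
      simp only [der, ne_eq, BT.lam.injEq, not_and]
      intro _
      exact cbv_ne_var u 0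
  | app t1 t2 => obtain ⟨T', S', h'⟩ := cbv_app_shape t1 t2; rw [h'] at h; cases h
  | op o' ts => simp [cbv] at h
lemma der_subst (x : ℕ) (W : BT O ar) : (der : BT O ar).subst x W = der := by
  by_cases h : (0 : ℕ) = x <;> simp [der, BT.subst, h]

lemma der_subst' (x : ℕ) (W : BT O ar) :
    (if (0:ℕ) = x then BT.lam 0 (BT.var 0) else BT.lam 0 (if (0:ℕ) = x then W else BT.var (0:ℕ)))
      = (der : BT O ar) := by
  by_cases h : (0 : ℕ) = x <;> simp [der, h]

/-- Substitution lemma for the CbV translation. -/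
lemma cbv_subst (u : Lam O ar) (x : ℕ) {V : Lam O ar} {W : BT O ar}
    (hV : cbv V = .bang W) : cbv (u.subst x V) = (cbv u).subst x W := by
  induction u with
  | var y =>
      by_cases h : y = x <;> simp [Lam.subst, cbv, BT.subst, h, hV]
  | lam y t ih =>
      by_cases h : y = x <;> simp [Lam.subst, cbv, BT.subst, h, ih]
  | op o' ts ih =>
      simp only [Lam.subst, cbv, BT.subst]
      exact congrArg _ (funext fun i => ih i)
  | app t1 t2 ih1 ih2 =>
      rcases cbv_shape t1 with ⟨S, h⟩ | ⟨T, S, h⟩ | ⟨o', Ts, h⟩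
      · simp only [Lam.subst, cbv, ih1, ih2, h, BT.subst]
      · simp only [Lam.subst, cbv, ih1, ih2, h, BT.subst, der_subst', der_subst]
      · simp only [Lam.subst, cbv, ih1, ih2, h, BT.subst, der_subst', der_subst]
/-- `cbv` images contain no d-redexes. -/
lemma dcount_cbv (t : Lam O ar) : dcount (cbv t) = 0 := by
  induction t with
  | var x => simp [cbv, dcount]
  | lam x u ih => simpa [cbv, dcount] using ih
  | op o' ts ih => simp [cbv, dcount, ih]
  | app t1 t2 ih1 ih2 =>
      rcases cbv_shape t1 with ⟨S, h⟩ | ⟨T, S, h⟩ | ⟨o', Ts, h⟩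
      · rw [h] at ih1
        simp only [dcount] at ih1
        have hne : S ≠ der := bang_ne_der h
        rw [cbv_app_bang h t2]
        simp [dcount, ih1, ih2, dflag_of_ne_der hne]
      · have h1 : dflag (der : BT O ar) (cbv t1) = 0 :=
          dflag_of_ne_bang (fun S' => by simp [h])
        have h2 : dflag (BT.app der (cbv t1)) (cbv t2) = 0 :=
          dflag_of_ne_der (by simp [der]) _
        rw [cbv_app_not_bang (fun S => by simp [h]) t2]
        simp [dcount, ih1, ih2, h1, h2, dcount_der]
      · have h1 : dflag (der : BT O ar) (cbv t1) = 0 :=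
          dflag_of_ne_bang (fun S' => by simp [h])
        have h2 : dflag (BT.app der (cbv t1)) (cbv t2) = 0 :=
          dflag_of_ne_der (by simp [der]) _
        rw [cbv_app_not_bang (fun S => by simp [h]) t2]
        simp [dcount, ih1, ih2, h1, h2, dcount_der]

lemma dcount_plug_le (C : BCtx O ar) (X : BT O ar) : dcount X ≤ dcount (C.plug X) := by
  induction C with
  | hole => exact le_rfl
  | lam y C ih => simpa [BCtx.plug, dcount] using ih
  | bang C ih => simpa [BCtx.plug, dcount] using ih
  | appL C s ih => simp only [BCtx.plug, dcount]; omega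
  | appR s C ih => simp only [BCtx.plug, dcount]; omega
  | op o' Ts i C ih =>
      simp only [BCtx.plug, dcount]
      have h2 := Finset.single_le_sum
        (f := fun j => dcount (Function.update Ts i (C.plug X) j))
        (fun j _ => Nat.zero_le _) (Finset.mem_univ i)
      simp only [Function.update_self] at h2
      exact le_trans ih h2

lemma dcount_redex_pos (C : BCtx O ar) (b : BT O ar) :
    1 ≤ dcount (C.plug (.app der (.bang b))) := by
  refine le_trans ?_ (dcount_plug_le C _)
  simp [dcount, dflag_der_bang]

/-- Terms with no d-redex are d-normal. -/
lemma normal_of_dcount {U : BT O ar} (h : dcount U = 0) : Normal (BT.Step dRoot) U := by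
  rintro V ⟨C, a, b, hab, rfl, rfl⟩
  rw [show a = BT.app der (.bang b) from hab] at h
  have := dcount_redex_pos C b
  omega

lemma cbv_normal (t : Lam O ar) : Normal (BT.Step dRoot) (cbv t) :=
  normal_of_dcount (dcount_cbv t)

lemma normal_rt {α : Type*} {r : α → α → Prop} {u v : α} (hu : Normal r u)
    (h : Relation.ReflTransGen r u v) : v = u := by
  rcases Relation.ReflTransGen.cases_head h with rfl | ⟨c, hc, -⟩
  · rfl
  · exact absurd hc (hu c)
/-- If a term contains exactly one d-redex, any two d-steps from it coincide. -/
lemma step_unique (C1 : BCtx O ar) : ∀ (C2 : BCtx O ar) (a b : BT O ar),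
    C1.plug (.app der (.bang a)) = C2.plug (.app der (.bang b)) →
    dcount (C1.plug (.app der (.bang a))) = 1 →
    C1.plug a = C2.plug b := by
  induction C1 with
  | hole =>
      intro C2 a b heq hdc
      cases C2 with
      | hole =>
          simp only [BCtx.plug, BT.app.injEq, BT.bang.injEq] at heq ⊢
          exact heq.2
      | appL C2' s =>
          simp only [BCtx.plug, BT.app.injEq] at heq
          have hpos := dcount_redex_pos C2' b
          rw [← heq.1, dcount_der] at hpos
          omega
      | appR s C2' =>
          simp only [BCtx.plug, BT.app.injEq] at heq
          obtain ⟨h1, h2⟩ := heq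
          cases C2' with
          | hole => exact nomatch h2
          | bang C2'' =>
              simp only [BCtx.plug, BT.bang.injEq] at h2
              have hpos := dcount_redex_pos C2'' b
              rw [← h2] at hpos
              simp only [BCtx.plug, dcount, dcount_der, dflag_der_bang] at hdc
              omega
          | lam y C2'' => exact nomatch h2
          | appL C2'' s2 => exact nomatch h2
          | appR s2 C2'' => exact nomatch h2
          | op o2 Ts2 j C2'' => exact nomatch h2
      | lam y C2' => exact nomatch heq
      | bang C2' => exact nomatch heq
      | op o2 Ts2 j C2' => exact nomatch heq
  | lam x C1' ih =>
      intro C2 a b heq hdc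
      cases C2 with
      | hole => exact nomatch heq
      | lam y C2' =>
          simp only [BCtx.plug, BT.lam.injEq] at heq ⊢
          obtain ⟨h1, h2⟩ := heq
          exact ⟨h1, ih C2' a b h2 (by simpa [BCtx.plug, dcount] using hdc)⟩
      | appL C2' s => exact nomatch heq
      | appR s C2' => exact nomatch heq
      | bang C2' => exact nomatch heq
      | op o2 Ts2 j C2' => exact nomatch heq
  | bang C1' ih =>
      intro C2 a b heq hdc
      cases C2 with
      | hole => exact nomatch heq
      | bang C2' =>
          simp only [BCtx.plug, BT.bang.injEq] at heq ⊢
          exact ih C2' a b heq (by simpa [BCtx.plug, dcount] using hdc)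
      | appL C2' s => exact nomatch heq
      | appR s C2' => exact nomatch heq
      | lam y C2' => exact nomatch heq
      | op o2 Ts2 j C2' => exact nomatch heq
  | appL C1' s ih =>
      intro C2 a b heq hdc
      have hpos := dcount_redex_pos C1' a
      cases C2 with
      | hole =>
          simp only [BCtx.plug, BT.app.injEq] at heq
          rw [heq.1, dcount_der] at hpos
          omega
      | appL C2' s2 =>
          simp only [BCtx.plug, BT.app.injEq] at heq ⊢
          obtain ⟨h1, h2⟩ := heq
          refine ⟨ih C2' a b h1 ?_, h2⟩
          simp only [BCtx.plug, dcount] at hdc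
          omega
      | appR s2 C2' =>
          simp only [BCtx.plug, BT.app.injEq] at heq
          have hpos2 := dcount_redex_pos C2' b
          rw [← heq.2] at hpos2
          simp only [BCtx.plug, dcount] at hdc
          omega
      | lam y C2' => exact nomatch heq
      | bang C2' => exact nomatch heq
      | op o2 Ts2 j C2' => exact nomatch heq
  | appR s C1' ih =>
      intro C2 a b heq hdc
      have hpos := dcount_redex_pos C1' a
      cases C2 with
      | hole =>
          simp only [BCtx.plug, BT.app.injEq] at heq
          obtain ⟨h1, h2⟩ := heq
          simp only [BCtx.plug, dcount] at hdc
          rw [h1, h2, dflag_der_bang, dcount_der] at hdc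
          rw [h2] at hpos
          simp only [dcount] at hpos hdc
          omega
      | appL C2' s2 =>
          simp only [BCtx.plug, BT.app.injEq] at heq
          have hpos2 := dcount_redex_pos C2' b
          rw [← heq.1] at hpos2
          simp only [BCtx.plug, dcount] at hdc
          omega
      | appR s2 C2' =>
          simp only [BCtx.plug, BT.app.injEq] at heq ⊢
          obtain ⟨h1, h2⟩ := heq
          refine ⟨h1, ih C2' a b h2 ?_⟩
          simp only [BCtx.plug, dcount] at hdc
          omega
      | lam y C2' => exact nomatch heq
      | bang C2' => exact nomatch heq
      | op o2 Ts2 j C2' => exact nomatch heq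
  | op o1 Ts1 i C1' ih =>
      intro C2 a b heq hdc
      cases C2 with
      | hole => exact nomatch heq
      | lam y C2' => exact nomatch heq
      | bang C2' => exact nomatch heq
      | appL C2' s => exact nomatch heq
      | appR s C2' => exact nomatch heq
      | op o2 Ts2 j C2' =>
          simp only [BCtx.plug] at heq ⊢
          injection heq with ho hT
          subst ho
          have hT' := eq_of_heq hT
          by_cases hij : i = j
          · subst hij
            have hP : C1'.plug (.app der (.bang a)) = C2'.plug (.app der (.bang b)) := by
              have := congrFun hT' i
              simpa [Function.update_self] using this
            have hdc1 : dcount (C1'.plug (.app der (.bang a))) = 1 := by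
              have hle := Finset.single_le_sum
                (f := fun k => dcount (Function.update Ts1 i (C1'.plug (.app der (.bang a))) k))
                (fun k _ => Nat.zero_le _) (Finset.mem_univ i)
              simp only [Function.update_self] at hle
              simp only [BCtx.plug, dcount] at hdc
              have hpos := dcount_redex_pos C1' a
              omega
            rw [ih C2' a b hP hdc1]
            congr 1
            funext k
            by_cases hk : k = i
            · subst hk; simp [Function.update_self]
            · have := congrFun hT' k
              simpa [Function.update_of_ne hk] using this
          · exfalso
            have h1 : C1'.plug (.app der (.bang a)) = Ts2 i := by
              have := congrFun hT' i
              simpa [Function.update_self, Function.update_of_ne hij] using this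
            have h2 : Ts1 j = C2'.plug (.app der (.bang b)) := by
              have := congrFun hT' j
              simpa [Function.update_self, Function.update_of_ne (Ne.symm hij)] using this
            have hpair := Finset.sum_pair
              (f := fun k => dcount (Function.update Ts1 i (C1'.plug (.app der (.bang a))) k)) hij
            have hsum : dcount (Function.update Ts1 i (C1'.plug (.app der (.bang a))) i)
                + dcount (Function.update Ts1 i (C1'.plug (.app der (.bang a))) j) ≤
                ∑ k, dcount (Function.update Ts1 i (C1'.plug (.app der (.bang a))) k) := by
              rw [← hpair]
              exact Finset.sum_le_sum_of_subset (Finset.subset_univ _)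
            simp only [Function.update_self, Function.update_of_ne (Ne.symm hij)] at hsum
            have hp1 := dcount_redex_pos C1' a
            have hp2 := dcount_redex_pos C2' b
            rw [← h2] at hp2
            simp only [BCtx.plug, dcount] at hdc
            omega
/-- Statement of the context-translation claim. -/
def ClaimA (c : LCtx O ar) (b : Lam O ar) : Prop :=
  (cbvCtx c).plug (cbv b) = cbv (c.plug b) ∨
  ∃ (D : BCtx O ar) (W : BT O ar), cbv b = .bang W ∧
    (cbvCtx c).plug (cbv b) = D.plug (.app der (.bang W)) ∧
    cbv (c.plug b) = D.plug W ∧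
    dcount ((cbvCtx c).plug (cbv b)) = 1

lemma cbvCtx_ne_bang (c : LCtx O ar) (hx : ∀ x c0, c ≠ .lam x c0) :
    ∀ C', cbvCtx c ≠ .bang C' := by
  cases c with
  | hole => simp [cbvCtx]
  | lam x c0 => exact absurd rfl (hx x c0)
  | appL c0 s => cases h0 : cbvCtx c0 <;> simp [cbvCtx, h0]
  | appR t c0 => cases h0 : cbv t <;> simp [cbvCtx, h0]
  | op o' ts i c0 => simp [cbvCtx]

lemma cbvCtx_plug_ne_bang (c : LCtx O ar) (hx : ∀ x c0, c ≠ .lam x c0) (hh : c ≠ .hole)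
    (X : BT O ar) : ∀ Y, (cbvCtx c).plug X ≠ .bang Y := by
  cases c with
  | hole => exact absurd rfl hh
  | lam x c0 => exact absurd rfl (hx x c0)
  | appL c0 s => cases h0 : cbvCtx c0 <;> simp [cbvCtx, h0, BCtx.plug]
  | appR t c0 => cases h0 : cbv t <;> simp [cbvCtx, h0, BCtx.plug]
  | op o' ts i c0 => simp [cbvCtx, BCtx.plug]

lemma cbv_plug_ne_bang (c : LCtx O ar) (hx : ∀ x c0, c ≠ .lam x c0) (hh : c ≠ .hole)
    (b : Lam O ar) : ∀ S', cbv (c.plug b) ≠ .bang S' := by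
  cases c with
  | hole => exact absurd rfl hh
  | lam x c0 => exact absurd rfl (hx x c0)
  | appL c0 s0 =>
      intro S'
      obtain ⟨T, S, h⟩ := cbv_app_shape (c0.plug b) s0
      simp [LCtx.plug, h]
  | appR s0 c0 =>
      intro S'
      obtain ⟨T, S, h⟩ := cbv_app_shape s0 (c0.plug b)
      simp [LCtx.plug, h]
  | op o' ts i c0 => intro S'; simp [LCtx.plug, cbv]

lemma cbvCtx_appL_lam (x : ℕ) (c : LCtx O ar) (s : Lam O ar) :
    cbvCtx (.appL (.lam x c) s) = .appL (.lam x (cbvCtx c)) (cbv s) := by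
  simp [cbvCtx]

lemma cbvCtx_appL_nb {c : LCtx O ar} (h : ∀ C', cbvCtx c ≠ .bang C') (s : Lam O ar) :
    cbvCtx (.appL c s) = .appL (.appR der (cbvCtx c)) (cbv s) := by
  cases h0 : cbvCtx c with
  | bang C' => exact absurd h0 (h C')
  | hole => simp [cbvCtx, h0]
  | lam y C' => simp [cbvCtx, h0]
  | appL C' T => simp [cbvCtx, h0]
  | appR T C' => simp [cbvCtx, h0]
  | op o' Ts j C' => simp [cbvCtx, h0]

lemma cbvCtx_appR_bang {t : Lam O ar} {T : BT O ar} (h : cbv t = .bang T) (c : LCtx O ar) :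
    cbvCtx (.appR t c) = .appR T (cbvCtx c) := by
  simp [cbvCtx, h]

lemma cbvCtx_appR_nb {t : Lam O ar} (h : ∀ S, cbv t ≠ .bang S) (c : LCtx O ar) :
    cbvCtx (.appR t c) = .appR (.app der (cbv t)) (cbvCtx c) := by
  cases h0 : cbv t with
  | bang S => exact absurd h0 (h S)
  | var y => simp [cbvCtx, h0]
  | lam y T => simp [cbvCtx, h0]
  | app T S => simp [cbvCtx, h0]
  | op o' Ts => simp [cbvCtx, h0]

lemma cbv_update {n : ℕ} (ts : Fin n → Lam O ar) (i : Fin n) (u : Lam O ar) :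
    (fun j => cbv (Function.update ts i u j)) = Function.update (fun j => cbv (ts j)) i (cbv u) := by
  funext j
  by_cases h : j = i
  · subst h; simp [Function.update_self]
  · simp [Function.update_of_ne h]
lemma claimA_appL_aux (c' : LCtx O ar) (s b : Lam O ar) (hx : ∀ x c0, c' ≠ .lam x c0)
    (hh : c' ≠ .hole) (ih : ClaimA c' b) : ClaimA (.appL c' s) b := by
  have hnbC := cbvCtx_ne_bang c' hx
  have hUnb := cbvCtx_plug_ne_bang c' hx hh (cbv b)
  have hVnb := cbv_plug_ne_bang c' hx hh b
  have hcc := cbvCtx_appL_nb hnbC s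
  rcases ih with hEq | ⟨D, W, hW, hU, hV, hdc⟩
  · left
    rw [hcc]
    simp only [BCtx.plug, LCtx.plug]
    rw [hEq, cbv_app_not_bang hVnb s]
  · right
    refine ⟨.appL (.appR der D) (cbv s), W, hW, ?_, ?_, ?_⟩
    · rw [hcc]; simp only [BCtx.plug]; rw [hU]
    · simp only [LCtx.plug]
      rw [cbv_app_not_bang hVnb s]
      simp only [BCtx.plug]
      rw [hV]
    · rw [hcc]
      simp only [BCtx.plug]
      have f1 : dflag (der : BT O ar) ((cbvCtx c').plug (cbv b)) = 0 :=
        dflag_of_ne_bang hUnb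
      have f2 : dflag (BT.app der ((cbvCtx c').plug (cbv b))) (cbv s) = 0 :=
        dflag_of_ne_der (by simp [der]) _
      simp [dcount, hdc, dcount_cbv s, f1, f2, dcount_der]

lemma claimA_appR_aux (t : Lam O ar) (c' : LCtx O ar) (b : Lam O ar) (H : BT O ar)
    (hH : cbvCtx (.appR t c') = .appR H (cbvCtx c'))
    (hcv : ∀ u : Lam O ar, cbv (.app t u) = .app H (cbv u))
    (hd0 : dcount H = 0) (hnd : H ≠ der) (ih : ClaimA c' b) : ClaimA (.appR t c') b := by
  rcases ih with hEq | ⟨D, W, hW, hU, hV, hdc⟩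
  · left
    rw [hH]
    simp only [BCtx.plug, LCtx.plug]
    rw [hEq, hcv]
  · right
    refine ⟨.appR H D, W, hW, ?_, ?_, ?_⟩
    · rw [hH]; simp only [BCtx.plug]; rw [hU]
    · simp only [LCtx.plug]; rw [hcv]; simp only [BCtx.plug]; rw [hV]
    · rw [hH]
      simp only [BCtx.plug]
      simp [dcount, hdc, hd0, dflag_of_ne_der hnd]

lemma claimA_all (c : LCtx O ar) (b : Lam O ar) : ClaimA c b := by
  cases c with
  | hole => exact Or.inl rfl
  | lam x c' =>
      rcases claimA_all c' b with hEq | ⟨D, W, hW, hU, hV, hdc⟩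
      · left
        simp only [cbvCtx, BCtx.plug, LCtx.plug, cbv]
        rw [hEq]
      · right
        refine ⟨.bang (.lam x D), W, hW, ?_, ?_, ?_⟩
        · simp only [cbvCtx, BCtx.plug]; rw [hU]
        · simp only [LCtx.plug, cbv, BCtx.plug]; rw [hV]
        · simp only [cbvCtx, BCtx.plug, dcount]; exact hdc
  | appL c' s =>
      cases c' with
      | hole =>
          by_cases hbb : ∃ W, cbv b = .bang W
          · obtain ⟨W, hW⟩ := hbb
            right
            have hcc := cbvCtx_appL_nb (cbvCtx_ne_bang .hole (by simp)) s
            refine ⟨.appL .hole (cbv s), W, hW, ?_, ?_, ?_⟩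
            · rw [hcc]; simp only [cbvCtx, BCtx.plug]; rw [hW]
            · simp only [LCtx.plug]
              rw [cbv_app_bang hW s]
              simp [BCtx.plug]
            · rw [hcc]
              simp only [cbvCtx, BCtx.plug]
              rw [hW]
              have f2 : dflag (BT.app der (BT.bang W)) (cbv s) = 0 :=
                dflag_of_ne_der (by simp [der]) _
              have f3 : dcount W = 0 := by
                have := dcount_cbv b; rw [hW] at this; simpa [dcount] using this
              simp [dcount, dcount_der, dflag_der_bang, f2, f3, dcount_cbv s]
          · push_neg at hbb
            left
            have hcc := cbvCtx_appL_nb (cbvCtx_ne_bang .hole (by simp)) s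
            rw [hcc]
            simp only [LCtx.plug]
            rw [cbv_app_not_bang hbb s]
            simp [cbvCtx, BCtx.plug]
      | lam y c'' =>
          rcases claimA_all c'' b with hEq | ⟨D, W, hW, hU, hV, hdc⟩
          · left
            rw [cbvCtx_appL_lam]
            simp only [BCtx.plug, LCtx.plug]
            rw [hEq, cbv_app_bang (show cbv (Lam.lam y (c''.plug b)) =
              .bang (.lam y (cbv (c''.plug b))) from rfl) s]
          · right
            refine ⟨.appL (.lam y D) (cbv s), W, hW, ?_, ?_, ?_⟩
            · rw [cbvCtx_appL_lam]; simp only [BCtx.plug]; rw [hU]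
            · simp only [LCtx.plug]
              rw [cbv_app_bang (show cbv (Lam.lam y (c''.plug b)) =
                .bang (.lam y (cbv (c''.plug b))) from rfl) s]
              simp only [BCtx.plug]
              rw [hV]
            · rw [cbvCtx_appL_lam]
              simp only [BCtx.plug]
              have f1 : BT.lam y ((cbvCtx c'').plug (cbv b)) ≠ der := by
                intro h
                simp only [der, BT.lam.injEq] at h
                rw [h.2] at hdc
                simp [dcount] at hdc
              simp [dcount, hdc, dcount_cbv s, dflag_of_ne_der f1]
      | appL c3 s3 =>
          exact claimA_appL_aux _ s b (by simp) (by simp) (claimA_all _ b)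
      | appR t3 c3 =>
          exact claimA_appL_aux _ s b (by simp) (by simp) (claimA_all _ b)
      | op o3 ts3 i3 c3 =>
          exact claimA_appL_aux _ s b (by simp) (by simp) (claimA_all _ b)
  | appR t c' =>
      by_cases hbb : ∃ T, cbv t = .bang T
      · obtain ⟨T, hT⟩ := hbb
        refine claimA_appR_aux t c' b T (cbvCtx_appR_bang hT c') (fun u => cbv_app_bang hT u)
          ?_ (bang_ne_der hT) (claimA_all c' b)
        have := dcount_cbv t; rw [hT] at this; simpa [dcount] using this
      · push_neg at hbb
        refine claimA_appR_aux t c' b (.app der (cbv t)) (cbvCtx_appR_nb hbb c')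
          (fun u => cbv_app_not_bang hbb u) ?_ (by simp [der]) (claimA_all c' b)
        simp [dcount, dcount_der, dcount_cbv t, dflag_of_ne_bang hbb]
  | op o' ts i c' =>
      rcases claimA_all c' b with hEq | ⟨D, W, hW, hU, hV, hdc⟩
      · left
        simp only [cbvCtx, BCtx.plug, LCtx.plug, cbv]
        rw [cbv_update, hEq]
      · right
        refine ⟨.op o' (fun j => cbv (ts j)) i D, W, hW, ?_, ?_, ?_⟩
        · simp only [cbvCtx, BCtx.plug]; rw [hU]
        · simp only [LCtx.plug, cbv, BCtx.plug]; rw [cbv_update, hV]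
        · simp only [cbvCtx, BCtx.plug, dcount]
          have e : ∀ j : Fin (ar o'), dcount (Function.update (fun j => cbv (ts j)) i
              ((cbvCtx c').plug (cbv b)) j) =
              Function.update (fun j => dcount (cbv (ts j))) i
              (dcount ((cbvCtx c').plug (cbv b))) j := by
            intro j
            by_cases h : j = i
            · subst h; simp [Function.update_self]
            · simp [Function.update_of_ne h]
          rw [Finset.sum_congr rfl (fun j _ => e j),
            Finset.sum_update_of_mem (Finset.mem_univ i), hdc]
          simp [dcount_cbv]
/-- The shapes of bang-terms that can be redex left-hand sides. -/
def GoodA (A : BT O ar) : Prop :=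
  (∃ x T S, A = .app (.lam x T) (.bang S)) ∨ (∃ o' Ts, A = .op o' Ts)

lemma good_plug_ne_var {A : BT O ar} (hA : GoodA A) (C : BCtx O ar) (y : ℕ) :
    C.plug A ≠ .var y := by
  cases C with
  | hole =>
      rcases hA with ⟨x', T, S, rfl⟩ | ⟨o', Ts, rfl⟩ <;> simp [BCtx.plug]
  | lam x C' => simp [BCtx.plug]
  | appL C' s => simp [BCtx.plug]
  | appR s C' => simp [BCtx.plug]
  | bang C' => simp [BCtx.plug]
  | op o2 Ts j C' => simp [BCtx.plug]

lemma good_plug_ne_der {A : BT O ar} (hA : GoodA A) (C : BCtx O ar) :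
    C.plug A ≠ der := by
  intro h
  cases C with
  | hole =>
      rcases hA with ⟨x', T, S, rfl⟩ | ⟨o', Ts, rfl⟩ <;> exact nomatch h
  | lam x C' =>
      simp only [BCtx.plug, der, BT.lam.injEq] at h
      exact good_plug_ne_var hA C' 0 h.2
  | appL C' s => exact nomatch h
  | appR s C' => exact nomatch h
  | bang C' => exact nomatch h
  | op o2 Ts j C' => exact nomatch h

/-- The inversion statement. -/
def InvStmt (t : Lam O ar) : Prop :=
  ∀ (C : BCtx O ar) (A : BT O ar), GoodA A → cbv t = C.plug A →
    ∃ (c : LCtx O ar) (a : Lam O ar), t = c.plug a ∧ cbv a = A ∧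
      ∀ X, C.plug X = (cbvCtx c).plug X

lemma inv_app_aux (t1 t2 : Lam O ar) (hnb : ∀ S, cbv t1 ≠ .bang S)
    (ih1 : InvStmt t1) (ih2 : InvStmt t2) : InvStmt (.app t1 t2) := by
  intro C A hA h
  rw [cbv_app_not_bang hnb t2] at h
  cases C with
  | hole =>
      exfalso
      simp only [BCtx.plug] at h
      rcases hA with ⟨x', T, S, rfl⟩ | ⟨o', Ts, rfl⟩
      · simp only [BT.app.injEq] at h
        exact nomatch h.1
      · exact nomatch h
  | appL C' s =>
      simp only [BCtx.plug, BT.app.injEq] at h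
      obtain ⟨h1, h2⟩ := h
      cases C' with
      | hole =>
          exfalso
          simp only [BCtx.plug] at h1
          rcases hA with ⟨x', T, S, rfl⟩ | ⟨o', Ts, rfl⟩
          · simp only [BT.app.injEq] at h1
            exact hnb S h1.2
          · exact nomatch h1
      | appL C'' s2 =>
          exfalso
          simp only [BCtx.plug, BT.app.injEq] at h1
          exact good_plug_ne_der hA C'' h1.1.symm
      | appR s2 C'' =>
          simp only [BCtx.plug, BT.app.injEq] at h1
          obtain ⟨hs2, h12⟩ := h1
          obtain ⟨c', a, ht1, hA', hplug⟩ := ih1 C'' A hA h12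
          have hxl : ∀ x c0, c' ≠ .lam x c0 := by
            rintro x c0 rfl
            exact hnb _ (by rw [ht1]; rfl)
          refine ⟨.appL c' t2, a, ?_, hA', ?_⟩
          · simp only [LCtx.plug]; rw [← ht1]
          · intro X
            rw [cbvCtx_appL_nb (cbvCtx_ne_bang c' hxl) t2]
            simp only [BCtx.plug]
            rw [← h2, ← hs2, hplug X]
      | lam y C'' => exact absurd h1 (by simp [BCtx.plug])
      | bang C'' => exact absurd h1 (by simp [BCtx.plug])
      | op o2 Ts j C'' => exact absurd h1 (by simp [BCtx.plug])
  | appR s C' =>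
      simp only [BCtx.plug, BT.app.injEq] at h
      obtain ⟨h1, h2⟩ := h
      obtain ⟨c', a, ht2, hA', hplug⟩ := ih2 C' A hA h2
      refine ⟨.appR t1 c', a, ?_, hA', ?_⟩
      · simp only [LCtx.plug]; rw [← ht2]
      · intro X
        rw [cbvCtx_appR_nb hnb c']
        simp only [BCtx.plug]
        rw [← h1, hplug X]
  | lam y C' => exact absurd h (by simp [BCtx.plug])
  | bang C' => exact absurd h (by simp [BCtx.plug])
  | op o2 Ts j C' => exact absurd h (by simp [BCtx.plug])

lemma inv_lemma (t : Lam O ar) : InvStmt t := by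
  cases t with
  | var x =>
      intro C A hA h
      exfalso
      cases C with
      | hole =>
          simp only [cbv, BCtx.plug] at h
          rcases hA with ⟨x', T, S, rfl⟩ | ⟨o', Ts, rfl⟩ <;> exact nomatch h
      | bang C' =>
          simp only [cbv, BCtx.plug, BT.bang.injEq] at h
          exact good_plug_ne_var hA C' x h.symm
      | lam y C' => exact absurd h (by simp [cbv, BCtx.plug])
      | appL C' s => exact absurd h (by simp [cbv, BCtx.plug])
      | appR s C' => exact absurd h (by simp [cbv, BCtx.plug])
      | op o2 Ts j C' => exact absurd h (by simp [cbv, BCtx.plug])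
  | lam x u =>
      intro C A hA h
      cases C with
      | hole =>
          exfalso
          simp only [cbv, BCtx.plug] at h
          rcases hA with ⟨x', T, S, rfl⟩ | ⟨o', Ts, rfl⟩ <;> exact nomatch h
      | bang C' =>
          simp only [cbv, BCtx.plug, BT.bang.injEq] at h
          cases C' with
          | hole =>
              exfalso
              simp only [BCtx.plug] at h
              rcases hA with ⟨x', T, S, rfl⟩ | ⟨o', Ts, rfl⟩ <;> exact nomatch h
          | lam y C'' =>
              simp only [BCtx.plug, BT.lam.injEq] at h
              obtain ⟨rfl, h2⟩ := h
              obtain ⟨c', a, hu, hA', hplug⟩ := inv_lemma u C'' A hA h2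
              refine ⟨.lam x c', a, ?_, hA', ?_⟩
              · simp only [LCtx.plug]; rw [← hu]
              · intro X
                simp only [BCtx.plug, cbvCtx]
                rw [hplug X]
          | appL C'' s2 => exact absurd h (by simp [BCtx.plug])
          | appR s2 C'' => exact absurd h (by simp [BCtx.plug])
          | bang C'' => exact absurd h (by simp [BCtx.plug])
          | op o2 Ts j C'' => exact absurd h (by simp [BCtx.plug])
      | lam y C' => exact absurd h (by simp [cbv, BCtx.plug])
      | appL C' s => exact absurd h (by simp [cbv, BCtx.plug])
      | appR s C' => exact absurd h (by simp [cbv, BCtx.plug])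
      | op o2 Ts j C' => exact absurd h (by simp [cbv, BCtx.plug])
  | op o1 ts =>
      intro C A hA h
      cases C with
      | hole =>
          refine ⟨.hole, .op o1 ts, rfl, ?_, fun X => rfl⟩
          simp only [BCtx.plug] at h
          exact h
      | op o2 Ts j C' =>
          simp only [cbv, BCtx.plug] at h
          injection h with ho hT
          subst ho
          have hT' := eq_of_heq hT
          have h1 : cbv (ts j) = C'.plug A := by
            have := congrFun hT' j
            simpa [Function.update_self] using this
          obtain ⟨c', a, hts, hA', hplug⟩ := inv_lemma (ts j) C' A hA h1
          refine ⟨.op o1 ts j c', a, ?_, hA', ?_⟩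
          · simp only [LCtx.plug]
            rw [← hts, Function.update_eq_self]
          · intro X
            simp only [BCtx.plug, cbvCtx]
            congr 1
            funext k
            by_cases hk : k = j
            · subst hk
              simp only [Function.update_self]
              exact hplug X
            · have := congrFun hT' k
              simp only [Function.update_of_ne hk] at this ⊢
              exact this.symm
      | lam y C' => exact absurd h (by simp [cbv, BCtx.plug])
      | bang C' => exact absurd h (by simp [cbv, BCtx.plug])
      | appL C' s => exact absurd h (by simp [cbv, BCtx.plug])
      | appR s C' => exact absurd h (by simp [cbv, BCtx.plug])
  | app t1 t2 =>
      cases t1 with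
      | var y =>
          intro C A hA h
          rw [cbv_app_bang (show cbv (Lam.var y) = .bang (.var y) from rfl) t2] at h
          cases C with
          | hole =>
              exfalso
              simp only [BCtx.plug] at h
              rcases hA with ⟨x', T, S, rfl⟩ | ⟨o', Ts, rfl⟩
              · simp only [BT.app.injEq] at h
                exact nomatch h.1
              · exact nomatch h
          | appL C' s =>
              exfalso
              simp only [BCtx.plug, BT.app.injEq] at h
              exact good_plug_ne_var hA C' y h.1.symm
          | appR s C' =>
              simp only [BCtx.plug, BT.app.injEq] at h
              obtain ⟨h1, h2⟩ := h
              obtain ⟨c', a, ht2, hA', hplug⟩ := inv_lemma t2 C' A hA h2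
              refine ⟨.appR (.var y) c', a, ?_, hA', ?_⟩
              · simp only [LCtx.plug]; rw [← ht2]
              · intro X
                rw [cbvCtx_appR_bang (show cbv (Lam.var y) = .bang (.var y) from rfl) c']
                simp only [BCtx.plug]
                rw [← h1, hplug X]
          | lam y' C' => exact absurd h (by simp [BCtx.plug])
          | bang C' => exact absurd h (by simp [BCtx.plug])
          | op o2 Ts j C' => exact absurd h (by simp [BCtx.plug])
      | lam x u =>
          intro C A hA h
          rw [cbv_app_bang (show cbv (Lam.lam x u) = .bang (.lam x (cbv u)) from rfl) t2] at h
          cases C with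
          | hole =>
              refine ⟨.hole, .app (.lam x u) t2, rfl, ?_, fun X => rfl⟩
              rw [cbv_app_bang (show cbv (Lam.lam x u) = .bang (.lam x (cbv u)) from rfl) t2]
              simp only [BCtx.plug] at h
              exact h
          | appL C' s =>
              simp only [BCtx.plug, BT.app.injEq] at h
              obtain ⟨h1, h2⟩ := h
              cases C' with
              | hole =>
                  exfalso
                  simp only [BCtx.plug] at h1
                  rcases hA with ⟨x', T, S, rfl⟩ | ⟨o', Ts, rfl⟩ <;> exact nomatch h1
              | lam x' C'' =>
                  simp only [BCtx.plug, BT.lam.injEq] at h1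
                  obtain ⟨rfl, h12⟩ := h1
                  obtain ⟨c'', a, hu, hA', hplug⟩ := inv_lemma u C'' A hA h12
                  refine ⟨.appL (.lam x c'') t2, a, ?_, hA', ?_⟩
                  · simp only [LCtx.plug]; rw [← hu]
                  · intro X
                    rw [cbvCtx_appL_lam]
                    simp only [BCtx.plug]
                    rw [← h2, hplug X]
              | appL C'' s2 => exact absurd h1 (by simp [BCtx.plug])
              | appR s2 C'' => exact absurd h1 (by simp [BCtx.plug])
              | bang C'' => exact absurd h1 (by simp [BCtx.plug])
              | op o2 Ts j C'' => exact absurd h1 (by simp [BCtx.plug])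
          | appR s C' =>
              simp only [BCtx.plug, BT.app.injEq] at h
              obtain ⟨h1, h2⟩ := h
              obtain ⟨c', a, ht2, hA', hplug⟩ := inv_lemma t2 C' A hA h2
              refine ⟨.appR (.lam x u) c', a, ?_, hA', ?_⟩
              · simp only [LCtx.plug]; rw [← ht2]
              · intro X
                rw [cbvCtx_appR_bang (show cbv (Lam.lam x u) =
                  .bang (.lam x (cbv u)) from rfl) c']
                simp only [BCtx.plug]
                rw [← h1, hplug X]
          | lam y' C' => exact absurd h (by simp [BCtx.plug])
          | bang C' => exact absurd h (by simp [BCtx.plug])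
          | op o2 Ts j C' => exact absurd h (by simp [BCtx.plug])
      | app t11 t12 =>
          have hnb : ∀ S, cbv (Lam.app t11 t12) ≠ .bang S := by
            obtain ⟨T, S, hh⟩ := cbv_app_shape t11 t12
            intro S'
            simp [hh]
          exact inv_app_aux _ t2 hnb (inv_lemma _) (inv_lemma t2)
      | op o1 ts =>
          have hnb : ∀ S, cbv (Lam.op o1 ts) ≠ .bang S := by
            intro S
            simp [cbv]
          exact inv_app_aux _ t2 hnb (inv_lemma _) (inv_lemma t2)
lemma cbv_redex_inv {a : Lam O ar} {x : ℕ} {T S : BT O ar}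
    (h : cbv a = .app (.lam x T) (.bang S)) :
    ∃ u V, a = .app (.lam x u) V ∧ V.isValue ∧ cbv u = T ∧ cbv V = .bang S := by
  cases a with
  | var y => exact absurd h (by simp [cbv])
  | lam y u => exact absurd h (by simp [cbv])
  | op o' ts => exact absurd h (by simp [cbv])
  | app a1 a2 =>
      cases a1 with
      | var y =>
          rw [cbv_app_bang (show cbv (Lam.var y) = .bang (.var y) from rfl) a2] at h
          simp only [BT.app.injEq] at h
          exact absurd h.1 (by simp)
      | lam y u =>
          rw [cbv_app_bang (show cbv (Lam.lam y u) = .bang (.lam y (cbv u)) from rfl) a2] at h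
          simp only [BT.app.injEq, BT.lam.injEq] at h
          obtain ⟨⟨rfl, hT⟩, hS⟩ := h
          exact ⟨u, a2, rfl, value_of_cbv_bang hS, hT, hS⟩
      | app t11 t12 =>
          have hnb : ∀ Z, cbv (Lam.app t11 t12) ≠ .bang Z := by
            obtain ⟨T', S', hh⟩ := cbv_app_shape t11 t12
            intro Z
            simp [hh]
          rw [cbv_app_not_bang hnb a2] at h
          simp only [BT.app.injEq] at h
          exact nomatch h.1
      | op o' ts =>
          have hnb : ∀ Z, cbv (Lam.op o' ts) ≠ .bang Z := by intro Z; simp [cbv]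
          rw [cbv_app_not_bang hnb a2] at h
          simp only [BT.app.injEq] at h
          exact nomatch h.1

/-- Simulation of CbV in the bang calculus: soundness and completeness for
`→βv` vs `→!β · →d⁼` and for each operator rule `→o` vs `→o · →d⁼`, via the CbV
translation. The operator rule is given both on λ-terms (`lamRule`) and on
bang-terms (`bangRule`, the corresponding rule), with left-hand sides of shape
`o(...)`, corresponding to each other under the CbV translation. -/
theorem cbv_simulation {O : Type} {ar : O → ℕ} (o : O)
    (lamRule : Lam O ar → Lam O ar → Prop) (bangRule : BT O ar → BT O ar → Prop)
    (hshapeL : ∀ a b, lamRule a b → ∃ ts, a = Lam.op o ts)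
    (hshapeB : ∀ a b, bangRule a b → ∃ Ts, a = BT.op o Ts)
    (hsound : ∀ a b, lamRule a b → bangRule (cbv a) (cbv b))
    (hcomplete : ∀ a S, bangRule (cbv a) S → ∃ b, S = cbv b ∧ lamRule a b) :
    -- CbV soundness for βv
    (∀ t t' : Lam O ar, Lam.Step betavRoot t t' →
      (∃ U, BT.Step bbetaRoot (cbv t) U ∧ Relation.ReflGen (BT.Step dRoot) U (cbv t')) ∧
      Normal (BT.Step dRoot) (cbv t')) ∧
    -- CbV soundness for o
    (∀ t t' : Lam O ar, Lam.Step lamRule t t' →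
      (∃ U, BT.Step bangRule (cbv t) U ∧ Relation.ReflGen (BT.Step dRoot) U (cbv t')) ∧
      Normal (BT.Step dRoot) (cbv t')) ∧
    -- CbV completeness for βv
    (∀ (t : Lam O ar) (S : BT O ar),
      (∃ U, BT.Step bbetaRoot (cbv t) U ∧ Relation.ReflTransGen (BT.Step dRoot) U S ∧
        Normal (BT.Step dRoot) S) →
      ∃ U t', BT.Step bbetaRoot (cbv t) U ∧ Relation.ReflGen (BT.Step dRoot) U S ∧
        S = cbv t' ∧ Lam.Step betavRoot t t') ∧
    -- CbV completeness for o
    (∀ (t : Lam O ar) (S : BT O ar),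
      (∃ U, BT.Step bangRule (cbv t) U ∧ Relation.ReflTransGen (BT.Step dRoot) U S ∧
        Normal (BT.Step dRoot) S) →
      ∃ U t', BT.Step bangRule (cbv t) U ∧ Relation.ReflGen (BT.Step dRoot) U S ∧
        S = cbv t' ∧ Lam.Step lamRule t t') := by
  refine ⟨?_, ?_, ?_, ?_⟩
  · -- soundness for βv
    rintro t t' ⟨c, a, b, hroot, rfl, rfl⟩
    obtain ⟨x, u, V, hval, rfl, rfl⟩ := hroot
    refine ⟨?_, cbv_normal _⟩
    obtain ⟨W, hW⟩ := cbv_value hval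
    have hcbva : cbv (Lam.app (Lam.lam x u) V) = .app (.lam x (cbv u)) (.bang W) := by
      rw [cbv_app_bang (show cbv (Lam.lam x u) = .bang (.lam x (cbv u)) from rfl) V, hW]
    have hEq : (cbvCtx c).plug (cbv (Lam.app (Lam.lam x u) V))
        = cbv (c.plug (Lam.app (Lam.lam x u) V)) := by
      rcases claimA_all c (Lam.app (Lam.lam x u) V) with hEq | ⟨D, W', hW', -⟩
      · exact hEq
      · rw [hcbva] at hW'
        exact absurd hW' (by simp)
    have hsub : cbv (u.subst x V) = (cbv u).subst x W := cbv_subst u x hW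
    refine ⟨(cbvCtx c).plug (cbv (u.subst x V)),
      ⟨cbvCtx c, cbv (Lam.app (Lam.lam x u) V), cbv (u.subst x V),
        ⟨x, cbv u, W, hcbva, hsub⟩, hEq.symm, rfl⟩, ?_⟩
    rcases claimA_all c (u.subst x V) with hEq2 | ⟨D, W', hW', hU, hV, hdc⟩
    · rw [hEq2]
    · exact Relation.ReflGen.single ⟨D, _, W', rfl, hU, hV⟩
  · -- soundness for o
    rintro t t' ⟨c, a, b, hroot, rfl, rfl⟩
    refine ⟨?_, cbv_normal _⟩
    obtain ⟨ts, rfl⟩ := hshapeL a b hroot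
    have hEq : (cbvCtx c).plug (cbv (Lam.op o ts)) = cbv (c.plug (Lam.op o ts)) := by
      rcases claimA_all c (Lam.op o ts) with hEq | ⟨D, W', hW', -⟩
      · exact hEq
      · exact absurd hW' (by simp [cbv])
    refine ⟨(cbvCtx c).plug (cbv b),
      ⟨cbvCtx c, cbv (Lam.op o ts), cbv b, hsound _ _ hroot, hEq.symm, rfl⟩, ?_⟩
    rcases claimA_all c b with hEq2 | ⟨D, W', hW', hU, hV, hdc⟩
    · rw [hEq2]
    · exact Relation.ReflGen.single ⟨D, _, W', rfl, hU, hV⟩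
  · -- completeness for βv
    rintro t S ⟨U, hstep, hrt, hSnorm⟩
    obtain ⟨C, A, B, hroot, hCA, hCB⟩ := hstep
    obtain ⟨x, T, S0, hA, hB⟩ := hroot
    obtain ⟨c, a, hta, hcbva, hplugeq⟩ := inv_lemma t C A (Or.inl ⟨x, T, S0, hA⟩) hCA
    rw [hA] at hcbva
    obtain ⟨u, V, haeq, hval, hTu, hVS⟩ := cbv_redex_inv hcbva
    have hBb : B = cbv (u.subst x V) := by
      rw [hB, cbv_subst u x hVS, hTu]
    have hstep_l : Lam.Step betavRoot t (c.plug (u.subst x V)) :=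
      ⟨c, a, u.subst x V, ⟨x, u, V, hval, haeq, rfl⟩, hta, rfl⟩
    have hUeq : U = (cbvCtx c).plug (cbv (u.subst x V)) := by
      rw [hCB, hplugeq B, hBb]
    rcases claimA_all c (u.subst x V) with hEq2 | ⟨D, W', hW', hU2, hV2, hdc⟩
    · have hUt' : U = cbv (c.plug (u.subst x V)) := by rw [hUeq, hEq2]
      have hSU : S = U := normal_rt (hUt' ▸ cbv_normal (c.plug (u.subst x V))) hrt
      refine ⟨U, c.plug (u.subst x V), ⟨C, A, B, ⟨x, T, S0, hA, hB⟩, hCA, hCB⟩, ?_, ?_, hstep_l⟩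
      · rw [hSU]
      · rw [hSU, hUt']
    · have hstep_d : BT.Step dRoot U (cbv (c.plug (u.subst x V))) :=
        ⟨D, _, W', rfl, by rw [hUeq]; exact hU2, hV2⟩
      have hdcU : dcount U = 1 := by rw [hUeq]; exact hdc
      rcases Relation.ReflTransGen.cases_head hrt with rfl | ⟨U1, h1, hrest⟩
      · exact absurd hstep_d (hSnorm _)
      · obtain ⟨C2, a2, b2, hroot2, hU1a, hU1b⟩ := h1
        have e1 : U = D.plug (.app der (.bang W')) := by rw [hUeq]; exact hU2
        have e2 : U = C2.plug (.app der (.bang b2)) := by rw [hU1a, hroot2]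
        have huniq := step_unique D C2 W' b2 (e1.symm.trans e2) (by rw [← e1]; exact hdcU)
        have hU1 : U1 = cbv (c.plug (u.subst x V)) := by
          rw [hU1b, ← huniq, ← hV2]
        have hScbv : S = cbv (c.plug (u.subst x V)) := by
          rw [← hU1]
          exact normal_rt (hU1 ▸ cbv_normal (c.plug (u.subst x V))) hrest
        refine ⟨U, c.plug (u.subst x V), ⟨C, A, B, ⟨x, T, S0, hA, hB⟩, hCA, hCB⟩, ?_, hScbv,
          hstep_l⟩
        rw [hScbv]
        exact Relation.ReflGen.single hstep_d
  · -- completeness for o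
    rintro t S ⟨U, hstep, hrt, hSnorm⟩
    obtain ⟨C, A, B, hroot, hCA, hCB⟩ := hstep
    obtain ⟨Ts, hA⟩ := hshapeB A B hroot
    obtain ⟨c, a, hta, hcbva, hplugeq⟩ := inv_lemma t C A (Or.inr ⟨o, Ts, hA⟩) hCA
    have hruleB : bangRule (cbv a) B := by rw [hcbva]; exact hroot
    obtain ⟨b, hBb, hlam⟩ := hcomplete a B hruleB
    have hstep_l : Lam.Step lamRule t (c.plug b) := ⟨c, a, b, hlam, hta, rfl⟩
    have hUeq : U = (cbvCtx c).plug (cbv b) := by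
      rw [hCB, hplugeq B, hBb]
    rcases claimA_all c b with hEq2 | ⟨D, W', hW', hU2, hV2, hdc⟩
    · have hUt' : U = cbv (c.plug b) := by rw [hUeq, hEq2]
      have hSU : S = U := normal_rt (hUt' ▸ cbv_normal (c.plug b)) hrt
      refine ⟨U, c.plug b, ⟨C, A, B, hroot, hCA, hCB⟩, ?_, ?_, hstep_l⟩
      · rw [hSU]
      · rw [hSU, hUt']
    · have hstep_d : BT.Step dRoot U (cbv (c.plug b)) :=
        ⟨D, _, W', rfl, by rw [hUeq]; exact hU2, hV2⟩
      have hdcU : dcount U = 1 := by rw [hUeq]; exact hdc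
      rcases Relation.ReflTransGen.cases_head hrt with rfl | ⟨U1, h1, hrest⟩
      · exact absurd hstep_d (hSnorm _)
      · obtain ⟨C2, a2, b2, hroot2, hU1a, hU1b⟩ := h1
        have e1 : U = D.plug (.app der (.bang W')) := by rw [hUeq]; exact hU2
        have e2 : U = C2.plug (.app der (.bang b2)) := by rw [hU1a, hroot2]
        have huniq := step_unique D C2 W' b2 (e1.symm.trans e2) (by rw [← e1]; exact hdcU)
        have hU1 : U1 = cbv (c.plug b) := by
          rw [hU1b, ← huniq, ← hV2]
        have hScbv : S = cbv (c.plug b) := by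
          rw [← hU1]
          exact normal_rt (hU1 ▸ cbv_normal (c.plug b)) hrest
        refine ⟨U, c.plug b, ⟨C, A, B, hroot, hCA, hCB⟩, ?_, hScbv, hstep_l⟩
        rw [hScbv]
        exact Relation.ReflGen.single hstep_d

end BangPaper
end

section
/- Preservation of level via the CbN translation: (1) for every λ-context c, ℓn(c) = ℓ(c^n); (2) for every λ-term t and k ∈ ℕ: t →β u at level k iff t^n →!β u^n at level k, and t →o u at level k iff t^n →o u^n at level k, for any o ∈ O; (3) for every λ-term t, ℓℓn(t) = ℓℓ(t^n), where ℓℓn and ℓℓ are the least levels with respect to the sets of β- and o-redexes, resp. !β- and o-redexes. -/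
namespace BangPaper

variable {O : Type} {ar : O → ℕ}

/-! ### Auxiliary lemmas for CbN level preservation -/

theorem cbn_inj : ∀ (t s : Lam O ar), cbn t = cbn s → t = s := by
  intro t
  induction t with
  | var x =>
    intro s h
    cases s with
    | var y => simpa [cbn] using h
    | lam => exact absurd h (by simp [cbn])
    | app => exact absurd h (by simp [cbn])
    | op => exact absurd h (by simp [cbn])
  | lam x t ih =>
    intro s h
    cases s with
    | var y => exact absurd h (by simp [cbn])
    | lam y u =>
      simp only [cbn, BT.lam.injEq] at h
      rw [Lam.lam.injEq]
      exact ⟨h.1, ih u h.2⟩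
    | app => exact absurd h (by simp [cbn])
    | op => exact absurd h (by simp [cbn])
  | app t1 t2 ih1 ih2 =>
    intro s h
    cases s with
    | var y => exact absurd h (by simp [cbn])
    | lam => exact absurd h (by simp [cbn])
    | app s1 s2 =>
      simp only [cbn, BT.app.injEq, BT.bang.injEq] at h
      rw [Lam.app.injEq]
      exact ⟨ih1 s1 h.1, ih2 s2 h.2⟩
    | op => exact absurd h (by simp [cbn])
  | op o ts ih =>
    intro s h
    cases s with
    | var y => exact absurd h (by simp [cbn])
    | lam => exact absurd h (by simp [cbn])
    | app => exact absurd h (by simp [cbn])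
    | op o' ts' =>
      simp only [cbn, BT.op.injEq] at h
      obtain ⟨rfl, h2⟩ := h
      have h2 := eq_of_heq h2
      simp only [Lam.op.injEq, heq_eq_eq, true_and]
      funext j
      exact ih j (ts' j) (congrFun h2 j)

theorem cbn_subst (t : Lam O ar) (x : ℕ) (u : Lam O ar) :
    cbn (Lam.subst t x u) = BT.subst (cbn t) x (cbn u) := by
  induction t with
  | var y =>
    by_cases h : y = x <;> simp [Lam.subst, cbn, BT.subst, h]
  | lam y t ih =>
    by_cases h : y = x <;> simp [Lam.subst, cbn, BT.subst, h, ih]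
  | app t1 t2 ih1 ih2 => simp [Lam.subst, cbn, BT.subst, ih1, ih2]
  | op o ts ih => simp only [Lam.subst, cbn, BT.subst]; congr 1; funext j; exact ih j

theorem cbn_plug (c : LCtx O ar) (t : Lam O ar) :
    cbn (c.plug t) = (cbnCtx c).plug (cbn t) := by
  induction c with
  | hole => rfl
  | lam x c ih => simp [LCtx.plug, cbn, cbnCtx, BCtx.plug, ih]
  | appL c s ih => simp [LCtx.plug, cbn, cbnCtx, BCtx.plug, ih]
  | appR s c ih => simp [LCtx.plug, cbn, cbnCtx, BCtx.plug, ih]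
  | op o ts i c ih =>
    simp only [LCtx.plug, cbn, cbnCtx, BCtx.plug]
    congr 1
    funext j
    rcases eq_or_ne j i with rfl | hj
    · simp [ih]
    · simp [Function.update_of_ne hj]

theorem levN_cbnCtx (c : LCtx O ar) : LCtx.levN c = BCtx.lev (cbnCtx c) := by
  induction c with
  | hole => rfl
  | lam x c ih => simpa [LCtx.levN, cbnCtx, BCtx.lev] using ih
  | appL c s ih => simpa [LCtx.levN, cbnCtx, BCtx.lev] using ih
  | appR s c ih => simp [LCtx.levN, cbnCtx, BCtx.lev, ih]
  | op o ts i c ih => simp [LCtx.levN, cbnCtx, BCtx.lev, ih]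

theorem cbn_inv : ∀ (n : ℕ) (C : BCtx O ar), sizeOf C ≤ n → ∀ (t : Lam O ar) (A : BT O ar),
    cbn t = C.plug A → (∀ S, A ≠ BT.bang S) →
    ∃ (c : LCtx O ar) (a : Lam O ar), t = LCtx.plug c a ∧ cbn a = A ∧
      BCtx.lev (cbnCtx c) = BCtx.lev C ∧ ∀ X, (cbnCtx c).plug X = BCtx.plug C X := by
  intro n
  induction n with
  | zero => intro C hC; cases C <;> simp at hC
  | succ n ihn =>
    intro C hC t A h hA
    cases C with
    | hole =>
      exact ⟨.hole, t, rfl, h, rfl, fun X => rfl⟩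
    | lam x C =>
      cases t with
      | var => exact absurd h (by simp [cbn, BCtx.plug])
      | app => exact absurd h (by simp [cbn, BCtx.plug])
      | op => exact absurd h (by simp [cbn, BCtx.plug])
      | lam y t =>
        simp only [cbn, BCtx.plug, BT.lam.injEq] at h
        obtain ⟨rfl, h2⟩ := h
        obtain ⟨c, a, h1, h2, h3, h4⟩ :=
          ihn C (by simp at hC; omega) t A h2 hA
        exact ⟨.lam y c, a, by simp [LCtx.plug, h1], h2,
          by simpa [cbnCtx, BCtx.lev] using h3,
          fun X => by simp [cbnCtx, BCtx.plug, h4 X]⟩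
    | appL C S =>
      cases t with
      | var => exact absurd h (by simp [cbn, BCtx.plug])
      | lam => exact absurd h (by simp [cbn, BCtx.plug])
      | op => exact absurd h (by simp [cbn, BCtx.plug])
      | app t1 t2 =>
        simp only [cbn, BCtx.plug, BT.app.injEq] at h
        obtain ⟨h1, h2⟩ := h
        obtain ⟨c, a, g1, g2, g3, g4⟩ :=
          ihn C (by simp at hC; omega) t1 A h1 hA
        exact ⟨.appL c t2, a, by simp [LCtx.plug, g1], g2,
          by simpa [cbnCtx, BCtx.lev] using g3,
          fun X => by simp [cbnCtx, BCtx.plug, g4 X, h2]⟩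
    | appR T C =>
      cases t with
      | var => exact absurd h (by simp [cbn, BCtx.plug])
      | lam => exact absurd h (by simp [cbn, BCtx.plug])
      | op => exact absurd h (by simp [cbn, BCtx.plug])
      | app t1 t2 =>
        simp only [cbn, BCtx.plug, BT.app.injEq] at h
        obtain ⟨h1, h2⟩ := h
        cases C with
        | hole => exact absurd h2.symm (hA (cbn t2))
        | lam => exact absurd h2 (by simp [BCtx.plug])
        | appL => exact absurd h2 (by simp [BCtx.plug])
        | appR => exact absurd h2 (by simp [BCtx.plug])
        | op => exact absurd h2 (by simp [BCtx.plug])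
        | bang C =>
          simp only [BCtx.plug, BT.bang.injEq] at h2
          obtain ⟨c, a, g1, g2, g3, g4⟩ :=
            ihn C (by simp at hC; omega) t2 A h2 hA
          exact ⟨.appR t1 c, a, by simp [LCtx.plug, g1], g2,
            by simpa [cbnCtx, BCtx.lev] using g3,
            fun X => by simp [cbnCtx, BCtx.plug, g4 X, h1]⟩
    | bang C =>
      cases t <;> exact absurd h (by simp [cbn, BCtx.plug])
    | op o Ts i C =>
      cases t with
      | var => exact absurd h (by simp [cbn, BCtx.plug])
      | lam => exact absurd h (by simp [cbn, BCtx.plug])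
      | app => exact absurd h (by simp [cbn, BCtx.plug])
      | op o' ts =>
        simp only [cbn, BCtx.plug, BT.op.injEq] at h
        obtain ⟨rfl, h2⟩ := h
        have h2 := eq_of_heq h2
        have hi : cbn (ts i) = BCtx.plug C A := by
          have := congrFun h2 i
          simpa using this
        obtain ⟨c, a, g1, g2, g3, g4⟩ :=
          ihn C (by simp at hC; omega) (ts i) A hi hA
        refine ⟨.op o' ts i c, a, ?_, g2,
          by simpa [cbnCtx, BCtx.lev] using g3, ?_⟩
        · simp only [LCtx.plug, ← g1, Function.update_eq_self]
        · intro X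
          simp only [cbnCtx, BCtx.plug, BT.op.injEq, heq_eq_eq, true_and]
          funext j
          rcases eq_or_ne j i with rfl | hj
          · simp [g4 X]
          · have := congrFun h2 j
            simp [Function.update_of_ne hj] at this ⊢
            exact this
/-- Preservation of level via the CbN translation: (1) for contexts,
(2) for reductions at each level `k` (for `β` vs `!β` and each operator rule),
(3) for the least level of a term, where the least levels are taken w.r.t. the
sets of β- and o-redexes on λ-terms, resp. !β- and o-redexes on bang-terms.
The family of operator rules is given both on λ-terms (`lamRule`) and on
bang-terms (`bangRule`, the corresponding rules), with left-hand sides of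
shape `o(...)`, corresponding to each other under the CbN translation. -/
theorem cbn_level_preservation {O : Type} {ar : O → ℕ}
    (lamRule : O → Lam O ar → Lam O ar → Prop)
    (bangRule : O → BT O ar → BT O ar → Prop)
    (hshapeL : ∀ o a b, lamRule o a b → ∃ ts, a = Lam.op o ts)
    (hshapeB : ∀ o a b, bangRule o a b → ∃ Ts, a = BT.op o Ts)
    (hsound : ∀ o a b, lamRule o a b → bangRule o (cbn a) (cbn b))
    (hcomplete : ∀ o a S, bangRule o (cbn a) S → ∃ b, S = cbn b ∧ lamRule o a b) :
    -- (1) for contexts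
    (∀ c : LCtx O ar, LCtx.levN c = BCtx.lev (cbnCtx c)) ∧
    -- (2) for reduction
    (∀ (t u : Lam O ar) (k : ℕ),
      (Lam.StepAt LCtx.levN betaRoot k t u ↔ BT.StepAt bbetaRoot k (cbn t) (cbn u)) ∧
      (∀ o, Lam.StepAt LCtx.levN (lamRule o) k t u ↔
        BT.StepAt (bangRule o) k (cbn t) (cbn u))) ∧
    -- (3) for least levels
    (∀ t : Lam O ar,
      Lam.ll LCtx.levN (Lam.RedSet betaRedex lamRule) t
        = BT.ll (BT.RedSet bangRule) (cbn t)) := by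
  classical
  -- shape inversion for β-redex images
  have shapeBeta : ∀ (a : Lam O ar) (x : ℕ) (T S : BT O ar),
      cbn a = BT.app (BT.lam x T) (BT.bang S) →
      ∃ t1 s1, a = Lam.app (Lam.lam x t1) s1 ∧ cbn t1 = T ∧ cbn s1 = S := by
    intro a x T S h
    cases a with
    | app a1 a2 =>
      cases a1 with
      | lam y t1 =>
        simp only [cbn, BT.app.injEq, BT.lam.injEq, BT.bang.injEq] at h
        obtain ⟨⟨rfl, hT⟩, hS⟩ := h
        exact ⟨t1, a2, rfl, hT, hS⟩
      | var => exact absurd h (by simp [cbn])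
      | app => exact absurd h (by simp [cbn])
      | op => exact absurd h (by simp [cbn])
    | var => exact absurd h (by simp [cbn])
    | lam => exact absurd h (by simp [cbn])
    | op => exact absurd h (by simp [cbn])
  refine ⟨levN_cbnCtx, ?_, ?_⟩
  · -- (2) reduction at each level
    intro t u k
    constructor
    · constructor
      · rintro ⟨c, a, b, ⟨x, t', s', rfl, rfl⟩, rfl, rfl, rfl⟩
        exact ⟨cbnCtx c, cbn (Lam.app (Lam.lam x t') s'), cbn (Lam.subst t' x s'),
          ⟨x, cbn t', cbn s', by simp [cbn], cbn_subst t' x s'⟩,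
          cbn_plug .., cbn_plug .., (levN_cbnCtx c).symm⟩
      · rintro ⟨C, A, B, ⟨x, T, S, rfl, rfl⟩, ht, hu, rfl⟩
        obtain ⟨c, a, rfl, g2, g3, g4⟩ :=
          cbn_inv (sizeOf C) C le_rfl t _ ht (by simp)
        obtain ⟨t1, s1, rfl, rfl, rfl⟩ := shapeBeta a x T S g2
        have hub : u = LCtx.plug c (Lam.subst t1 x s1) := by
          apply cbn_inj
          rw [cbn_plug, cbn_subst, g4, hu]
        exact ⟨c, _, _, ⟨x, t1, s1, rfl, rfl⟩, rfl, hub,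
          (levN_cbnCtx c).trans g3⟩
    · intro o
      constructor
      · rintro ⟨c, a, b, hr, rfl, rfl, rfl⟩
        exact ⟨cbnCtx c, cbn a, cbn b, hsound o a b hr,
          cbn_plug .., cbn_plug .., (levN_cbnCtx c).symm⟩
      · rintro ⟨C, A, B, hr, ht, hu, rfl⟩
        obtain ⟨Ts, rfl⟩ := hshapeB o A B hr
        obtain ⟨c, a, rfl, g2, g3, g4⟩ :=
          cbn_inv (sizeOf C) C le_rfl t _ ht (by simp)
        obtain ⟨b, rfl, hrule⟩ := hcomplete o a B (g2 ▸ hr)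
        have hub : u = LCtx.plug c b := by
          apply cbn_inj
          rw [cbn_plug, g4, hu]
        exact ⟨c, a, b, hrule, rfl, hub, (levN_cbnCtx c).trans g3⟩
  · -- (3) least levels
    intro t
    unfold Lam.ll BT.ll
    congr 1
    ext n
    constructor
    · rintro ⟨c, r, hred, rfl, rfl⟩
      refine ⟨cbnCtx c, cbn r, ?_, cbn_plug .., by rw [← levN_cbnCtx]⟩
      cases hred with
      | inl h =>
        obtain ⟨x, t', s', rfl⟩ := h
        exact Or.inl ⟨x, cbn t', cbn s', by simp [cbn]⟩
      | inr h =>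
        obtain ⟨o, b, hb⟩ := h
        exact Or.inr ⟨o, cbn b, hsound o _ b hb⟩
    · rintro ⟨C, R, hred, ht, rfl⟩
      have hnb : ∀ S, R ≠ BT.bang S := by
        cases hred with
        | inl h => obtain ⟨x, T, S, rfl⟩ := h; simp
        | inr h =>
          obtain ⟨o, B, hB⟩ := h
          obtain ⟨Ts, rfl⟩ := hshapeB o _ B hB
          simp
      obtain ⟨c, a, rfl, g2, g3, g4⟩ := cbn_inv (sizeOf C) C le_rfl t R ht hnb
      refine ⟨c, a, ?_, rfl, ?_⟩
      · cases hred with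
        | inl h =>
          obtain ⟨x, T, S, rfl⟩ := h
          obtain ⟨t1, s1, rfl, -, -⟩ := shapeBeta a x T S g2
          exact Or.inl ⟨x, t1, s1, rfl⟩
        | inr h =>
          obtain ⟨o, B, hB⟩ := h
          obtain ⟨b, -, hrule⟩ := hcomplete o a B (g2 ▸ hB)
          exact Or.inr ⟨o, b, hrule⟩
      · rw [levN_cbnCtx, g3]


end BangPaper
end
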